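/- Let (X,d) be a complete metric space and let f : X → (−∞,∞] be proper, lower semicontinuous, and bounded below, with ρ̄ = inf f. Assume f is continuous on slope-bounded sets: whenever x_k → x with the values f(x_k) and the slopes |∇f|(x_k) uniformly bounded, one has f(x_k) → f(x). Assume the global KL property: there exist ρ > inf f and a desingularizer φ such that every x with inf f < f(x) < ρ satisfies |∇(φ ∘ (f − inf f))|(x) ≥ 1. Let α > 0 and let (x_k) be a proximal sequence, meaning x_{k+1} minimizes f + α·d(·,x_k)² over X for every k, with f(x₀) < ρ and f(x_k) > inf f for all k. Then the trajectory has finite length, Σ_k d(x_k, x_{k+1}) < ∞, the iterates x_k converge to some point x*, f(x_k) → f(x*), and |∇f|(x_k) → 0; in particular x* is a critical point of f. -/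

import Mathlib

open Filter Topology
open scoped ENNReal NNReal

/-- The slope `|∇f|(x)`: the infimum of all `δ > 0` such that `x` is a local minimizer of
`f + δ·d(·,x)`; it equals `∞` at points where `f x = ⊤`. -/
noncomputable def slopeM {X : Type*} [MetricSpace X] (f : X → EReal) (x : X) : ℝ≥0∞ :=
  if f x = ⊤ then ⊤
  else sInf {δ : ℝ≥0∞ | ∃ c : ℝ, 0 < c ∧ δ = ENNReal.ofReal c ∧
    ∀ᶠ z in 𝓝 x, f x ≤ f z + ((c * dist z x : ℝ) : EReal)}

/-- The modulus of identifiability: `liminf_{x → xbar, x ∉ M, f(x) → f(xbar)} |∇f|(x)`. -/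
noncomputable def identModulus {X : Type*} [MetricSpace X] (f : X → EReal) (M : Set X)
    (xbar : X) : ℝ≥0∞ :=
  Filter.liminf (slopeM f) (𝓝[Mᶜ] xbar ⊓ Filter.comap f (𝓝 (f xbar)))

/-- `M` is an identifiable set for `f` at `xbar`: it is closed, contains `xbar`, and the
modulus of identifiability is strictly positive. -/
def Identifiable {X : Type*} [MetricSpace X] (f : X → EReal) (M : Set X) (xbar : X) : Prop :=
  IsClosed M ∧ xbar ∈ M ∧ 0 < identModulus f M xbar

/-- A desingularizer `φ : [0,∞] → [0,∞]`, modelled by its restriction `toFun` to `[0,∞)`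
together with its value `topVal` at `+∞`:  `φ(0) = 0`, `φ` is continuous on `[0,∞)`,
`φ(τ) → φ(+∞)` as `τ → +∞`, and `φ` has a continuous strictly positive derivative
on `(0,∞)`. -/
structure Desingularizer where
  toFun : ℝ → ℝ
  topVal : EReal
  nonneg : ∀ τ : ℝ, 0 ≤ τ → 0 ≤ toFun τ
  topVal_nonneg : (0 : EReal) ≤ topVal
  map_zero : toFun 0 = 0
  contOn : ContinuousOn toFun (Set.Ici 0)
  diffAt : ∀ τ : ℝ, 0 < τ → DifferentiableAt ℝ toFun τ
  deriv_pos : ∀ τ : ℝ, 0 < τ → 0 < deriv toFun τ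
  deriv_contOn : ContinuousOn (deriv toFun) (Set.Ioi 0)
  tendsto_topVal : Filter.Tendsto (fun τ : ℝ => ((toFun τ : ℝ) : EReal)) Filter.atTop (nhds topVal)

/-- The composite function `φ ∘ max{f − v, 0}`. -/
noncomputable def klComp {X : Type*} (φ : Desingularizer) (f : X → EReal) (v : EReal)
    (x : X) : EReal :=
  if f x = ⊤ then φ.topVal else ((φ.toFun (max ((f x - v).toReal) 0) : ℝ) : EReal)

/-- `f` has the KL property at `xbar` with desingularizer `φ`: the level set
`{x : f(x) ≤ f(xbar)}` is identifiable at `xbar` for the composite `φ ∘ f_{xbar}`. -/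
def KLProperty {X : Type*} [MetricSpace X] (f : X → EReal) (xbar : X) (φ : Desingularizer) : Prop :=
  Identifiable (klComp φ f (f xbar)) {x | f x ≤ f xbar} xbar

theorem ekeland_vp {Y : Type*} [MetricSpace Y] [CompleteSpace Y]
    (G : Y → ℝ) (hG : LowerSemicontinuous G) (m : ℝ) (hm : ∀ z, m ≤ G z)
    (lam : ℝ) (hlam : 0 < lam) (x0 : Y) :
    ∃ y : Y, lam * dist x0 y ≤ G x0 - G y ∧ ∀ z, G y ≤ G z + lam * dist z y := by
  classical
  set S : Y → Set Y := fun w => {z | G z + lam * dist z w ≤ G w} with hS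
  have hSself : ∀ w, w ∈ S w := by
    intro w; simp [hS]
  have hStrans : ∀ u w z, z ∈ S w → w ∈ S u → z ∈ S u := by
    intro u w z hz hw
    simp only [hS, Set.mem_setOf_eq] at *
    have := dist_triangle z w u
    nlinarith [dist_nonneg (x := z) (y := w)]
  have hSne : ∀ w, (S w).Nonempty := fun w => ⟨w, hSself w⟩
  have hbddS : ∀ w, BddBelow (G '' S w) := by
    intro w; exact ⟨m, by rintro t ⟨z, _, rfl⟩; exact hm z⟩
  have hex : ∀ (w : Y) (n : ℕ), ∃ z, z ∈ S w ∧ G z < sInf (G '' S w) + (1/2 : ℝ)^n := by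
    intro w n
    have h1 : sInf (G '' S w) < sInf (G '' S w) + (1/2 : ℝ)^n := by
      have : (0:ℝ) < (1/2 : ℝ)^n := by positivity
      linarith
    obtain ⟨t, ⟨z, hzS, rfl⟩, hlt⟩ := (csInf_lt_iff (hbddS w) ((hSne w).image G)).mp h1
    exact ⟨z, hzS, hlt⟩
  obtain ⟨y, hy0, hystep⟩ : ∃ y : ℕ → Y, y 0 = x0 ∧
      ∀ n, y (n+1) ∈ S (y n) ∧ G (y (n+1)) < sInf (G '' S (y n)) + (1/2 : ℝ)^n := by
    refine ⟨fun n => Nat.rec x0 (fun n w => (hex w n).choose) n, rfl, fun n => ?_⟩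
    exact (hex _ n).choose_spec
  have hchain : ∀ n k, y (n+k) ∈ S (y n) := by
    intro n k
    induction k with
    | zero => exact hSself (y n)
    | succ k ih => exact hStrans (y n) (y (n+k)) (y (n+k+1)) (hystep (n+k)).1 ih
  have hchain' : ∀ n j, n ≤ j → y j ∈ S (y n) := by
    intro n j hnj
    obtain ⟨k, rfl⟩ := Nat.exists_eq_add_of_le hnj
    exact hchain n k
  have hdec : ∀ n j, n ≤ j → G (y j) + lam * dist (y j) (y n) ≤ G (y n) :=
    fun n j h => hchain' n j h
  have hanti : Antitone (fun n => G (y n)) := by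
    refine antitone_nat_of_succ_le (fun n => ?_)
    have := hdec n (n+1) (Nat.le_succ n)
    nlinarith [dist_nonneg (x := y (n+1)) (y := y n)]
  -- summability / Cauchy
  have hdist_le : ∀ n, dist (y n) (y (n+1)) ≤ (G (y n) - G (y (n+1))) / lam := by
    intro n
    have := hdec n (n+1) (Nat.le_succ n)
    rw [dist_comm]
    rw [le_div_iff₀ hlam]
    nlinarith
  have hsum : Summable (fun n => dist (y n) (y (n+1))) := by
    refine summable_of_sum_range_le (c := (G x0 - m)/lam) (fun n => dist_nonneg) (fun n => ?_)
    have : ∑ i ∈ Finset.range n, dist (y i) (y (i+1))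
        ≤ ∑ i ∈ Finset.range n, (G (y i) - G (y (i+1))) / lam :=
      Finset.sum_le_sum (fun i _ => hdist_le i)
    rw [← Finset.sum_div] at this
    have htel : ∑ i ∈ Finset.range n, (G (y i) - G (y (i+1))) = G (y 0) - G (y n) := by
      rw [Finset.sum_range_sub']
    rw [htel] at this
    refine this.trans ?_
    rw [div_le_div_iff_of_pos_right hlam, hy0]
    have := hm (y n); linarith
  have hcauchy : CauchySeq y := cauchySeq_of_summable_dist hsum
  obtain ⟨yb, hlim⟩ := cauchySeq_tendsto_of_complete hcauchy
  set L : ℝ := ⨅ n, G (y n) with hLdef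
  have hbddR : BddBelow (Set.range fun n => G (y n)) := ⟨m, by rintro t ⟨n, rfl⟩; exact hm (y n)⟩
  have hconv : Tendsto (fun n => G (y n)) atTop (𝓝 L) := tendsto_atTop_ciInf hanti hbddR
  have hLle : ∀ n, L ≤ G (y n) := fun n => ciInf_le hbddR n
  have hGyb : G yb ≤ L := by
    by_contra h
    push_neg at h
    obtain ⟨t, htL, htyb⟩ := exists_between h
    have h1 : ∀ᶠ n in atTop, t < G (y n) := hlim.eventually (hG yb t htyb)
    have h2 : ∀ᶠ n in atTop, G (y n) < t := hconv.eventually_lt_const htL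
    obtain ⟨n, hn1, hn2⟩ := (h1.and h2).exists
    linarith
  have hyb_in : ∀ n, yb ∈ S (y n) := by
    intro n
    have hdd : lam * dist yb (y n) ≤ G (y n) - L := by
      have htend : Tendsto (fun j => lam * dist (y j) (y n)) atTop (𝓝 (lam * dist yb (y n))) :=
        (hlim.dist tendsto_const_nhds).const_mul lam
      refine le_of_tendsto htend ?_
      filter_upwards [eventually_ge_atTop n] with j hj
      have := hdec n j hj
      have := hLle j
      linarith
    have : G yb + lam * dist yb (y n) ≤ G (y n) := by linarith
    exact this
  refine ⟨yb, ?_, ?_⟩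
  · have := hyb_in 0; rw [hy0] at this
    simp only [hS, Set.mem_setOf_eq] at this
    rw [dist_comm]; linarith
  · intro z
    by_contra h
    push_neg at h
    have hzS : z ∈ S yb := le_of_lt h
    have hzSn : ∀ n, z ∈ S (y n) := fun n => hStrans (y n) yb z hzS (hyb_in n)
    have hkey : ∀ n, lam * dist z (y (n+1)) < (1/2:ℝ)^n := by
      intro n
      have h1 : G (y (n+1)) < sInf (G '' S (y n)) + (1/2:ℝ)^n := (hystep n).2
      have h2 : sInf (G '' S (y n)) ≤ G z := csInf_le (hbddS (y n)) ⟨z, hzSn n, rfl⟩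
      have h3 : G z + lam * dist z (y (n+1)) ≤ G (y (n+1)) := hzSn (n+1)
      linarith
    have hzyb : dist z yb ≤ 0 := by
      have ht1 : Tendsto (fun n => dist z (y (n+1))) atTop (𝓝 (dist z yb)) :=
        tendsto_const_nhds.dist (hlim.comp (tendsto_add_atTop_nat 1))
      have ht2 : Tendsto (fun n : ℕ => ((1/2:ℝ)^n)/lam) atTop (𝓝 0) := by
        have : Tendsto (fun n : ℕ => (1/2:ℝ)^n) atTop (𝓝 0) := by
          apply tendsto_pow_atTop_nhds_zero_of_lt_one <;> norm_num
        simpa using this.div_const lam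
      refine le_of_tendsto_of_tendsto' ht1 ht2 (fun n => ?_)
      have := hkey n
      rw [le_div_iff₀ hlam]
      linarith [hkey n]
    have : z = yb := by
      have := dist_nonneg (x := z) (y := yb)
      have : dist z yb = 0 := le_antisymm hzyb this
      exact dist_eq_zero.mp this
    subst this
    simp only [dist_self, mul_zero, add_zero] at h
    exact lt_irrefl _ h

lemma Desingularizer.strictMonoOn (φ : Desingularizer) : StrictMonoOn φ.toFun (Set.Ici 0) := by
  refine strictMonoOn_of_deriv_pos (convex_Ici 0) φ.contOn ?_
  rw [interior_Ici]
  exact fun x hx => φ.deriv_pos x hx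

lemma Desingularizer.monoOn (φ : Desingularizer) {a b : ℝ} (ha : 0 ≤ a) (hb : 0 ≤ b)
    (hab : a ≤ b) : φ.toFun a ≤ φ.toFun b := by
  rcases eq_or_lt_of_le hab with rfl | h
  · exact le_refl _
  · exact (φ.strictMonoOn ha hb h).le

lemma Desingularizer.coe_lt_topVal (φ : Desingularizer) {b : ℝ} (hb : 0 ≤ b) :
    ((φ.toFun b : ℝ) : EReal) < φ.topVal := by
  have h1 : ((φ.toFun (b+1) : ℝ) : EReal) ≤ φ.topVal := by
    refine ge_of_tendsto φ.tendsto_topVal ?_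
    filter_upwards [eventually_ge_atTop (b+1)] with τ hτ
    exact EReal.coe_le_coe_iff.mpr (φ.monoOn (by linarith) (by linarith) hτ)
  have h2 : φ.toFun b < φ.toFun (b+1) := φ.strictMonoOn hb (by simp; linarith) (by linarith)
  exact lt_of_lt_of_le (EReal.coe_lt_coe_iff.mpr h2) h1

lemma slopeM_le_of_ev {X : Type*} [MetricSpace X] (F : X → EReal) (x : X) (hFx : F x ≠ ⊤)
    (c : ℝ) (hc : 0 < c)
    (h : ∀ᶠ z in 𝓝 x, F x ≤ F z + ((c * dist z x : ℝ) : EReal)) :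
    slopeM F x ≤ ENNReal.ofReal c := by
  rw [slopeM, if_neg hFx]
  exact sInf_le ⟨c, hc, rfl, h⟩

theorem error_bound {X : Type*} [MetricSpace X] [CompleteSpace X]
    (f : X → EReal) (hlsc : LowerSemicontinuous f) (hbot : ∀ z, f z ≠ ⊥)
    (ρ : EReal) (φ : Desingularizer)
    (hKL : ∀ z : X, (⨅ w, f w) < f z → f z < ρ →
      (1 : ℝ≥0∞) ≤ slopeM (klComp φ f (⨅ w, f w)) z)
    (hvbot : (⨅ w, f w) ≠ ⊥) (hvtop : (⨅ w, f w) ≠ ⊤)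
    (xx : X) (hx1 : (⨅ w, f w) < f xx) (hx2 : f xx < ρ)
    (s lam : ℝ) (hs : 0 < s) (hsr : s < (f xx - (⨅ w, f w)).toReal)
    (hlam0 : 0 < lam) (hlam1 : lam < 1) :
    ∃ y : X, f y ≤ (⨅ w, f w) + (s : EReal) ∧
      lam * dist xx y ≤ φ.toFun ((f xx - (⨅ w, f w)).toReal) - φ.toFun s := by
  classical
  set v : EReal := ⨅ w, f w with hvdef
  set vR : ℝ := v.toReal with hvR
  have hv' : v = ((vR : ℝ) : EReal) := (EReal.coe_toReal hvtop hvbot).symm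
  have hle : ∀ z : X, v ≤ f z := fun z => iInf_le _ z
  have hfin : ∀ z : X, f z ≠ ⊤ → f z = (((f z).toReal : ℝ) : EReal) :=
    fun z hz => (EReal.coe_toReal hz (hbot z)).symm
  have hsubR : ∀ z : X, f z ≠ ⊤ → (f z - v).toReal = (f z).toReal - vR :=
    fun z hz => EReal.toReal_sub hz (hbot z) hvtop hvbot
  have htReal_le : ∀ z : X, f z ≠ ⊤ → vR ≤ (f z).toReal := by
    intro z hz
    have := hle z
    rw [hv', hfin z hz] at this
    exact EReal.coe_le_coe_iff.mp this
  -- the "R" function matching klComp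
  set RR : X → ℝ := fun z => max ((f z - v).toReal) 0 with hRRdef
  have hRR : ∀ z : X, f z ≠ ⊤ → RR z = (f z).toReal - vR := by
    intro z hz
    simp only [hRRdef, hsubR z hz]
    exact max_eq_left (by linarith [htReal_le z hz])
  have hRRnn : ∀ z : X, 0 ≤ RR z := fun z => le_max_right _ _
  have hfx_top : f xx ≠ ⊤ := hx2.ne_top
  set fxR : ℝ := (f xx).toReal with hfxR
  set r : ℝ := fxR - vR with hrdef
  have hr_eq : (f xx - v).toReal = r := hsubR xx hfx_top
  have hsr' : s < r := by rwa [hr_eq] at hsr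
  have hr0 : 0 < r := hs.trans hsr'
  have hRRxx : RR xx = r := by rw [hRR xx hfx_top]
  -- the domain
  set D : Set X := f ⁻¹' Set.Iic (v + (r : EReal)) with hDdef
  have hDclosed : IsClosed D := lowerSemicontinuous_iff_isClosed_preimage.mp hlsc _
  have hvr_ne_top : v + (r : EReal) ≠ ⊤ := by
    rw [hv', ← EReal.coe_add]; exact EReal.coe_ne_top _
  have hmemD : ∀ z : X, z ∈ D ↔ f z ≤ v + (r : EReal) := fun z => Iff.rfl
  have hDtop : ∀ z : X, z ∈ D → f z ≠ ⊤ := by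
    intro z hz h
    have hz' : f z ≤ v + (r : EReal) := hz
    rw [h] at hz'
    exact hvr_ne_top (top_le_iff.mp hz')
  have hD_RR_le : ∀ z : X, z ∈ D → RR z ≤ r := by
    intro z hz
    rw [hRR z (hDtop z hz)]
    have : f z ≤ v + (r : EReal) := hz
    rw [hv', ← EReal.coe_add, hfin z (hDtop z hz)] at this
    have := EReal.coe_le_coe_iff.mp this
    linarith
  have hD_gt : ∀ z : X, f z ≠ ⊤ → ∀ b : ℝ, v + (b : EReal) < f z → b < RR z := by
    intro z hz b hb
    rw [hRR z hz]
    rw [hv', ← EReal.coe_add, hfin z hz] at hb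
    have := EReal.coe_lt_coe_iff.mp hb
    linarith
  have hxD : xx ∈ D := by
    rw [hmemD, hfin xx hfx_top, hv', ← EReal.coe_add]
    exact EReal.coe_le_coe_iff.mpr (by rw [← hfxR]; linarith)
  haveI : CompleteSpace D := hDclosed.completeSpace_coe
  -- the Ekeland function
  set G : D → ℝ := fun z => max (φ.toFun (RR z.val)) (φ.toFun s) with hGdef
  have hGm : ∀ z : D, φ.toFun s ≤ G z := fun z => le_max_right _ _
  have hGlsc : LowerSemicontinuous G := by
    intro z₀ t ht
    rcases lt_or_ge t (φ.toFun s) with hts | hts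
    · filter_upwards with z
      exact lt_of_lt_of_le hts (le_max_right _ _)
    · have h1 : t < φ.toFun (RR z₀.val) := by
        rcases lt_max_iff.mp ht with h | h
        · exact h
        · exact absurd h (not_lt.mpr hts)
      have hs_lt : s < RR z₀.val := by
        by_contra h
        push_neg at h
        have : φ.toFun (RR z₀.val) ≤ φ.toFun s := φ.monoOn (hRRnn _) hs.le h
        have := φ.nonneg s hs.le
        linarith
      have hRpos : 0 < RR z₀.val := hs.trans hs_lt
      have hcont : ContinuousAt φ.toFun (RR z₀.val) :=
        φ.contOn.continuousAt (Ici_mem_nhds hRpos)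
      have hev : ∀ᶠ b in 𝓝 (RR z₀.val), t < φ.toFun b :=
        hcont.eventually (eventually_gt_nhds h1)
      have hIoo : Set.Ioo s (RR z₀.val) ∈ 𝓝[<] (RR z₀.val) :=
        Ioo_mem_nhdsLT_of_mem ⟨hs_lt, le_refl _⟩
      have hev' : {b | t < φ.toFun b} ∈ 𝓝[<] (RR z₀.val) :=
        nhdsWithin_le_nhds hev
      obtain ⟨b, hb1, hb2⟩ := ((nhdsLT_neBot _).nonempty_of_mem
        (Filter.inter_mem hev' hIoo))
      -- hb1 : t < φ.toFun b, hb2 : b ∈ Ioo s (RR z₀)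
      have hfev : ∀ᶠ w in 𝓝 z₀.val, v + (b : EReal) < f w := by
        apply hlsc z₀.val
        rw [hv', ← EReal.coe_add, hfin z₀.val (hDtop _ z₀.prop)]
        apply EReal.coe_lt_coe_iff.mpr
        have := hb2.2
        rw [hRR _ (hDtop _ z₀.prop)] at this
        linarith
      have hfev2 := (continuous_subtype_val.tendsto z₀).eventually hfev
      filter_upwards [hfev2] with z hz
      refine lt_of_lt_of_le ?_ (le_max_left _ _)
      have hbRz : b < RR z.val := hD_gt z.val (hDtop z.val z.prop) b hz
      exact lt_of_lt_of_le hb1 (φ.monoOn (hs.le.trans hb2.1.le) (hRRnn _) hbRz.le)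
  obtain ⟨y, hy1, hy2⟩ := ekeland_vp G hGlsc (φ.toFun s) hGm lam hlam0 ⟨xx, hxD⟩
  have hGx0 : G ⟨xx, hxD⟩ = φ.toFun r := by
    simp only [hGdef, hRRxx]
    exact max_eq_left (φ.monoOn hs.le hr0.le hsr'.le)
  rcases le_or_gt (φ.toFun (RR y.val)) (φ.toFun s) with hycase | hycase
  · -- case (i): y is below level s
    refine ⟨y.val, ?_, ?_⟩
    · have hRys : RR y.val ≤ s :=
        (φ.strictMonoOn.le_iff_le (hRRnn _) hs.le).mp hycase
      rw [hfin y.val (hDtop _ y.prop), hv', ← EReal.coe_add]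
      apply EReal.coe_le_coe_iff.mpr
      have := hRR y.val (hDtop _ y.prop)
      rw [this] at hRys
      linarith
    · rw [hr_eq]
      have : φ.toFun s ≤ G y := hGm y
      rw [hGx0] at hy1
      rw [Subtype.dist_eq] at hy1
      linarith
  · -- case (ii): contradiction with KL
    exfalso
    have hytop : f y.val ≠ ⊤ := hDtop _ y.prop
    have hsRy : s < RR y.val := (φ.strictMonoOn.lt_iff_lt hs.le (hRRnn _)).mp hycase
    have hfy_gt : v < f y.val := by
      rw [hv', hfin y.val hytop]
      apply EReal.coe_lt_coe_iff.mpr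
      have := hRR y.val hytop
      rw [this] at hsRy
      linarith
    have hfy_lt : f y.val < ρ := by
      have h1 : f y.val ≤ v + (r : EReal) := y.prop
      have h2 : v + (r : EReal) = f xx := by
        rw [hv', ← EReal.coe_add, hfin xx hfx_top]
        norm_num [hrdef, hfxR]
      exact lt_of_le_of_lt (h2 ▸ h1) hx2
    have hKLy := hKL y.val hfy_gt hfy_lt
    set δ : ℝ := (φ.toFun (RR y.val) - φ.toFun s)/lam with hδdef
    have hδpos : 0 < δ := div_pos (by linarith) hlam0
    have hgy : klComp φ f v y.val = ((φ.toFun (RR y.val) : ℝ) : EReal) := by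
      rw [klComp, if_neg hytop]
    have hev : ∀ᶠ z in 𝓝 y.val,
        klComp φ f v y.val ≤ klComp φ f v z + ((lam * dist z y.val : ℝ) : EReal) := by
      filter_upwards [Metric.ball_mem_nhds y.val hδpos] with z hzball
      rw [Metric.mem_ball] at hzball
      have hdnn : (0:ℝ) ≤ lam * dist z y.val :=
        mul_nonneg hlam0.le dist_nonneg
      rw [hgy]
      by_cases hztop : f z = ⊤
      · rw [klComp, if_pos hztop]
        calc ((φ.toFun (RR y.val) : ℝ) : EReal) ≤ φ.topVal := (φ.coe_lt_topVal (hRRnn _)).le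
          _ ≤ φ.topVal + ((lam * dist z y.val : ℝ) : EReal) :=
            le_add_of_nonneg_right (EReal.coe_nonneg.mpr hdnn)
      · rw [klComp, if_neg hztop, ← EReal.coe_add]
        apply EReal.coe_le_coe_iff.mpr
        show φ.toFun (RR y.val) ≤ φ.toFun (RR z) + lam * dist z y.val
        by_cases hzD : z ∈ D
        · have h := hy2 ⟨z, hzD⟩
          rw [Subtype.dist_eq] at h
          simp only [hGdef] at h
          have hGy : max (φ.toFun (RR y.val)) (φ.toFun s) = φ.toFun (RR y.val) :=
            max_eq_left hycase.le
          rw [hGy] at h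
          rcases le_or_gt (φ.toFun s) (φ.toFun (RR z)) with hc | hc
          · rw [max_eq_left hc] at h
            exact h
          · rw [max_eq_right hc.le] at h
            -- h : φ (RR y) ≤ φ s + lam * dist z y; but lam * dist < lam*δ = φ(RRy) - φ s
            have : lam * dist z y.val < lam * δ := by
              apply mul_lt_mul_of_pos_left hzball hlam0
            rw [hδdef, mul_div_cancel₀ _ hlam0.ne'] at this
            linarith
        · -- z outside D
          have hzgt : v + (r : EReal) < f z := by
            rw [hmemD] at hzD
            exact lt_of_not_ge hzD
          have h1 : r < RR z := hD_gt z hztop r hzgt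
          have h2 : RR y.val ≤ r := hD_RR_le y.val y.prop
          have := φ.monoOn (hRRnn y.val) (hRRnn z) (h2.trans h1.le)
          linarith
    have hsl : slopeM (klComp φ f v) y.val ≤ ENNReal.ofReal lam := by
      refine slopeM_le_of_ev _ _ ?_ lam hlam0 hev
      rw [hgy]
      exact EReal.coe_ne_top _
    have hcon : (1:ℝ≥0∞) ≤ ENNReal.ofReal lam := le_trans hKLy hsl
    exact absurd hcon (not_le.mpr (ENNReal.ofReal_lt_one.mpr hlam1))

/-- Convergence of proximal sequences under a global KL property: the trajectory has finite
length, and the iterates converge to a critical point. -/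
theorem proximal_sequence_converges_of_KL {X : Type*} [MetricSpace X] [CompleteSpace X]
    (f : X → EReal) (hproper : ∃ z, f z ≠ ⊤) (hlsc : LowerSemicontinuous f)
    (hbot : ∀ z, f z ≠ ⊥) (hbdd : ∃ c : ℝ, ∀ z, (c : EReal) ≤ f z)
    (hcont : ∀ (xk : ℕ → X) (xlim : X), Tendsto xk atTop (𝓝 xlim) →
      (∃ C : ℝ, ∀ k, f (xk k) ≤ (C : EReal) ∧ ((-C : ℝ) : EReal) ≤ f (xk k) ∧
        slopeM f (xk k) ≤ ENNReal.ofReal C) →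
      Tendsto (fun k => f (xk k)) atTop (𝓝 (f xlim)))
    (ρ : EReal) (hρ : (⨅ z, f z) < ρ) (φ : Desingularizer)
    (hKL : ∀ z : X, (⨅ w, f w) < f z → f z < ρ →
      (1 : ℝ≥0∞) ≤ slopeM (klComp φ f (⨅ w, f w)) z)
    (α : ℝ) (hα : 0 < α) (x : ℕ → X)
    (hprox : ∀ k, ∀ z : X, f (x (k+1)) + ((α * dist (x (k+1)) (x k) ^ 2 : ℝ) : EReal)
      ≤ f z + ((α * dist z (x k) ^ 2 : ℝ) : EReal))
    (hinit : f (x 0) < ρ) (hgt : ∀ k, (⨅ w, f w) < f (x k)) :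
    Summable (fun k => dist (x k) (x (k+1))) ∧
    ∃ xs : X, Tendsto x atTop (𝓝 xs) ∧ f xs ≠ ⊤ ∧
      Tendsto (fun k => f (x k)) atTop (𝓝 (f xs)) ∧
      Tendsto (fun k => slopeM f (x k)) atTop (𝓝 0) := by
  classical
  obtain ⟨c, hc⟩ := hbdd
  obtain ⟨z₀, hz₀⟩ := hproper
  set v : EReal := ⨅ w, f w with hvdef
  have hvbot : v ≠ ⊥ := ((EReal.bot_lt_coe c).trans_le (le_iInf hc)).ne'
  have hvtop : v ≠ ⊤ := ((iInf_le f z₀).trans_lt (lt_top_iff_ne_top.mpr hz₀)).ne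
  set vR : ℝ := v.toReal with hvRdef
  have hv' : v = ((vR : ℝ) : EReal) := (EReal.coe_toReal hvtop hvbot).symm
  have hle : ∀ z : X, v ≤ f z := fun z => iInf_le _ z
  set dd : ℕ → ℝ := fun k => dist (x (k+1)) (x k) with hdddef
  have hddnn : ∀ k, 0 ≤ dd k := fun k => dist_nonneg
  -- basic descent
  have hdesc : ∀ k, f (x (k+1)) + ((α * dd k ^ 2 : ℝ) : EReal) ≤ f (x k) := by
    intro k
    have := hprox k (x k)
    simpa using this
  have hmono : ∀ k, f (x (k+1)) ≤ f (x k) := by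
    intro k
    refine le_trans ?_ (hdesc k)
    refine le_add_of_nonneg_right (EReal.coe_nonneg.mpr (by positivity))
  have hmono' : ∀ j k, j ≤ k → f (x k) ≤ f (x j) := by
    intro j k hjk
    induction k with
    | zero => have hj0 : j = 0 := Nat.le_zero.mp hjk; subst hj0; exact le_refl _
    | succ k ih =>
      rcases Nat.lt_or_ge j (k+1) with h | h
      · exact le_trans (hmono k) (ih (Nat.lt_succ_iff.mp h))
      · have : j = k + 1 := le_antisymm hjk h
        subst this; exact le_refl _
  have hlt_ρ : ∀ k, f (x k) < ρ := fun k => lt_of_le_of_lt (hmono' 0 k (Nat.zero_le k)) hinit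
  have hftop : ∀ k, f (x k) ≠ ⊤ := fun k => (hlt_ρ k).ne_top
  set aR : ℕ → ℝ := fun k => (f (x k)).toReal with haRdef
  have hfx : ∀ k, f (x k) = ((aR k : ℝ) : EReal) := fun k => (EReal.coe_toReal (hftop k) (hbot _)).symm
  have hdescR : ∀ k, aR (k+1) + α * dd k ^ 2 ≤ aR k := by
    intro k
    have := hdesc k
    rw [hfx k, hfx (k+1), ← EReal.coe_add] at this
    exact_mod_cast this
  have hgtR : ∀ k, vR < aR k := by
    intro k
    have := hgt k
    rw [hv', hfx k] at this
    exact_mod_cast this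
  set rk : ℕ → ℝ := fun k => aR k - vR with hrkdef
  have hrkpos : ∀ k, 0 < rk k := fun k => by simp only [hrkdef]; linarith [hgtR k]
  have hrk_eq : ∀ k, (f (x k) - v).toReal = rk k := by
    intro k
    rw [EReal.toReal_sub (hftop k) (hbot _) hvtop hvbot]
  have hrk_anti : ∀ k, rk (k+1) ≤ rk k := by
    intro k
    simp only [hrkdef]
    nlinarith [hdescR k, hddnn k, sq_nonneg (dd k), mul_nonneg hα.le (sq_nonneg (dd k))]
  have hrk_anti' : ∀ j k, j ≤ k → rk k ≤ rk j := by
    intro j k hjk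
    induction k with
    | zero => have hj0 : j = 0 := Nat.le_zero.mp hjk; subst hj0; exact le_refl _
    | succ k ih =>
      rcases Nat.lt_or_ge j (k+1) with h | h
      · exact le_trans (hrk_anti k) (ih (Nat.lt_succ_iff.mp h))
      · have : j = k + 1 := le_antisymm hjk h
        subst this; exact le_refl _
  -- KEY STEP: one-step length estimate
  have hstep : ∀ k, dd k ≤ φ.toFun (rk k) - φ.toFun (rk (k+1)) := by
    intro k
    rcases eq_or_lt_of_le (hrk_anti k) with heq | hlt
    · -- equal values: step is zero
      have h0 : α * dd k ^ 2 ≤ 0 := by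
        have := hdescR k
        simp only [hrkdef] at heq
        nlinarith
      have h1 : dd k ^ 2 = 0 := le_antisymm (by nlinarith) (sq_nonneg _)
      have : dd k = 0 := by
        have := pow_eq_zero_iff (n := 2) (by norm_num) |>.mp h1
        exact this
      rw [this, heq]
      simp
    · have hkey : ∀ lam : ℝ, 0 < lam → lam < 1 →
          lam * dd k ≤ φ.toFun (rk k) - φ.toFun (rk (k+1)) := by
        intro lam hlam0 hlam1
        obtain ⟨y, hy1, hy2⟩ := error_bound f hlsc hbot ρ φ hKL hvbot hvtop (x k)
          (hgt k) (hlt_ρ k) (rk (k+1)) lam (hrkpos (k+1)) (by rw [hrk_eq k]; exact hlt)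
          hlam0 hlam1
        rw [hrk_eq k] at hy2
        -- proximal inequality at y
        have hp := hprox k y
        have hdy : dd k ≤ dist y (x k) := by
          have hfy_le : f y ≤ ((vR + rk (k+1) : ℝ) : EReal) := by
            rw [EReal.coe_add, ← hv']
            exact hy1
          have hfy_top : f y ≠ ⊤ := by
            intro h; rw [h] at hfy_le
            exact (EReal.coe_ne_top _) (top_le_iff.mp hfy_le)
          have hfyR : f y = (((f y).toReal : ℝ) : EReal) := (EReal.coe_toReal hfy_top (hbot _)).symm
          rw [hfx (k+1), hfyR, ← EReal.coe_add, ← EReal.coe_add] at hp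
          have hpp := EReal.coe_le_coe_iff.mp hp
          have hfy_leR : (f y).toReal ≤ vR + rk (k+1) := by
            rw [hfyR] at hfy_le; exact_mod_cast hfy_le
          have haR1 : aR (k+1) = vR + rk (k+1) := by simp [hrkdef]
          have hsq : dd k ^ 2 ≤ dist y (x k) ^ 2 := by
            have h4 : α * dd k ^ 2 ≤ α * dist y (x k) ^ 2 := by nlinarith
            exact le_of_mul_le_mul_left h4 hα
          nlinarith [hsq, dist_nonneg (x := y) (y := x k), hddnn k]
        calc lam * dd k ≤ lam * dist y (x k) := by
              exact mul_le_mul_of_nonneg_left hdy hlam0.le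
          _ = lam * dist (x k) y := by rw [dist_comm]
          _ ≤ φ.toFun (rk k) - φ.toFun (rk (k+1)) := hy2
      -- pass to the limit lam → 1
      by_contra hcon
      push_neg at hcon
      set B : ℝ := φ.toFun (rk k) - φ.toFun (rk (k+1)) with hBdef
      have hB0 : 0 ≤ B := by
        have := φ.monoOn (hrkpos (k+1)).le (hrkpos k).le (hrk_anti k)
        simp only [hBdef]; linarith
      have hdd0 : 0 < dd k := lt_of_le_of_lt hB0 hcon
      set lam : ℝ := (B / dd k + 1)/2 with hlamdef
      have hlam0 : 0 < lam := by
        have : 0 ≤ B / dd k := div_nonneg hB0 hdd0.le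
        simp only [hlamdef]; linarith
      have hlam1 : lam < 1 := by
        have : B / dd k < 1 := (div_lt_one hdd0).mpr hcon
        simp only [hlamdef]; linarith
      have hk := hkey lam hlam0 hlam1
      have heqq : lam * dd k = (B + dd k)/2 := by
        rw [hlamdef]
        field_simp
      rw [heqq] at hk
      linarith
  -- summability
  have hsum : Summable (fun k => dist (x k) (x (k+1))) := by
    refine summable_of_sum_range_le (c := φ.toFun (rk 0)) (fun n => dist_nonneg) (fun n => ?_)
    calc ∑ i ∈ Finset.range n, dist (x i) (x (i+1))
        = ∑ i ∈ Finset.range n, dd i := Finset.sum_congr rfl (fun i _ => dist_comm _ _)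
      _ ≤ ∑ i ∈ Finset.range n, (φ.toFun (rk i) - φ.toFun (rk (i+1))) :=
          Finset.sum_le_sum (fun i _ => hstep i)
      _ = φ.toFun (rk 0) - φ.toFun (rk n) := Finset.sum_range_sub' (fun i => φ.toFun (rk i)) n
      _ ≤ φ.toFun (rk 0) := by linarith [φ.nonneg (rk n) (hrkpos n).le]
  refine ⟨hsum, ?_⟩
  have hcauchy : CauchySeq x := cauchySeq_of_summable_dist hsum
  obtain ⟨xs, hxs⟩ := cauchySeq_tendsto_of_complete hcauchy
  -- slope bound
  have hslope : ∀ k, slopeM f (x (k+1)) ≤ ENNReal.ofReal (2*α*dd k) := by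
    intro k
    refine ENNReal.le_of_forall_pos_le_add (fun ε hε _ => ?_)
    have hεR0 : (0:ℝ) < (ε:ℝ) := NNReal.coe_pos.mpr hε
    set εR : ℝ := (ε : ℝ) with hεRdef
    set cc : ℝ := 2*α*dd k + εR with hccdef
    have h2αd : (0:ℝ) ≤ 2*α*dd k := by
      have := hddnn k
      nlinarith
    have hcc0 : 0 < cc := by simp only [hccdef]; linarith
    have hev : ∀ᶠ z in 𝓝 (x (k+1)),
        f (x (k+1)) ≤ f z + ((cc * dist z (x (k+1)) : ℝ) : EReal) := by
      filter_upwards [Metric.ball_mem_nhds (x (k+1)) (show (0:ℝ) < εR/α from div_pos hεR0 hα)]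
        with z hz
      rw [Metric.mem_ball] at hz
      by_cases hzt : f z = ⊤
      · rw [hzt]
        have h7 : (⊤:EReal) + ((cc * dist z (x (k+1)) : ℝ) : EReal) = ⊤ := EReal.top_add_coe _
        rw [h7]
        exact le_top
      · have hfz : f z = (((f z).toReal : ℝ) : EReal) := (EReal.coe_toReal hzt (hbot z)).symm
        have hp := hprox k z
        rw [hfx (k+1), hfz, ← EReal.coe_add, ← EReal.coe_add] at hp
        have hpp := EReal.coe_le_coe_iff.mp hp
        rw [hfx (k+1), hfz, ← EReal.coe_add]
        apply EReal.coe_le_coe_iff.mpr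
        set dz : ℝ := dist z (x (k+1)) with hdzdef
        have hdznn : 0 ≤ dz := dist_nonneg
        have htri : dist z (x k) ≤ dz + dd k := by
          calc dist z (x k) ≤ dist z (x (k+1)) + dist (x (k+1)) (x k) := dist_triangle _ _ _
            _ = dz + dd k := rfl
        have h5 : α * dist z (x k)^2 ≤ α * (dz + dd k)^2 := by
          apply mul_le_mul_of_nonneg_left _ hα.le
          nlinarith [dist_nonneg (x := z) (y := x k)]
        have h6 : α * dz^2 ≤ εR * dz := by
          have h61 : dz * α < εR := (lt_div_iff₀ hα).mp hz
          nlinarith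
        simp only [hccdef]
        nlinarith [hddnn k]
    have := slopeM_le_of_ev f (x (k+1)) (hftop (k+1)) cc hcc0 hev
    refine le_trans this ?_
    rw [hccdef, ENNReal.ofReal_add h2αd hεR0.le, hεRdef, ENNReal.ofReal_coe_nnreal]
  have hdd0 : Tendsto dd atTop (𝓝 0) := by
    have h := hsum.tendsto_atTop_zero
    have heq : (fun k => dist (x k) (x (k+1))) = dd := funext fun k => dist_comm _ _
    rwa [heq] at h
  have hofReal : Tendsto (fun k => ENNReal.ofReal (2*α*dd k)) atTop (𝓝 0) := by
    have h2 : Tendsto (fun k => 2*α*dd k) atTop (𝓝 0) := by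
      simpa using hdd0.const_mul (2*α)
    have h3 := ENNReal.tendsto_ofReal h2
    simpa using h3
  have hslope_succ : Tendsto (fun k => slopeM f (x (k+1))) atTop (𝓝 0) :=
    tendsto_of_tendsto_of_tendsto_of_le_of_le tendsto_const_nhds hofReal
      (fun k => zero_le) (fun k => hslope k)
  have hslope0 : Tendsto (fun k => slopeM f (x k)) atTop (𝓝 0) :=
    (Filter.tendsto_add_atTop_iff_nat 1).mp hslope_succ
  -- continuity hypothesis application
  set C : ℝ := max (max (|aR 0|) (|vR|)) (2*α*(φ.toFun (rk 0))) + 1 with hCdef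
  have hboundC : ∀ k, f (x (k+1)) ≤ (C:EReal) ∧ ((-C : ℝ):EReal) ≤ f (x (k+1)) ∧
      slopeM f (x (k+1)) ≤ ENNReal.ofReal C := by
    intro k
    have h1 : aR (k+1) ≤ aR 0 := by
      have := hrk_anti' 0 (k+1) (Nat.zero_le _)
      simp only [hrkdef] at this
      linarith
    refine ⟨?_, ?_, ?_⟩
    · rw [hfx (k+1)]
      apply EReal.coe_le_coe_iff.mpr
      have : |aR 0| ≤ C := by
        simp only [hCdef]
        have := le_max_left (max (|aR 0|) (|vR|)) (2*α*(φ.toFun (rk 0)))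
        have := le_max_left (|aR 0|) (|vR|)
        linarith
      linarith [le_abs_self (aR 0)]
    · rw [hfx (k+1)]
      apply EReal.coe_le_coe_iff.mpr
      have h2 : |vR| ≤ C := by
        simp only [hCdef]
        have := le_max_left (max (|aR 0|) (|vR|)) (2*α*(φ.toFun (rk 0)))
        have := le_max_right (|aR 0|) (|vR|)
        linarith
      have h3 : vR < aR (k+1) := hgtR (k+1)
      linarith [neg_abs_le vR]
    · refine le_trans (hslope k) (ENNReal.ofReal_le_ofReal ?_)
      have h4 : dd k ≤ φ.toFun (rk 0) := by
        have h41 := hstep k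
        have h42 : φ.toFun (rk k) ≤ φ.toFun (rk 0) :=
          φ.monoOn (hrkpos k).le (hrkpos 0).le (hrk_anti' 0 k (Nat.zero_le _))
        have h43 := φ.nonneg (rk (k+1)) (hrkpos (k+1)).le
        linarith
      have h5 : 2*α*dd k ≤ 2*α*(φ.toFun (rk 0)) := by nlinarith
      simp only [hCdef]
      have := le_max_right (max (|aR 0|) (|vR|)) (2*α*(φ.toFun (rk 0)))
      linarith
  have hxs' : Tendsto (fun k => x (k+1)) atTop (𝓝 xs) := hxs.comp (tendsto_add_atTop_nat 1)
  have hfc := hcont (fun k => x (k+1)) xs hxs' ⟨C, hboundC⟩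
  have hftend : Tendsto (fun k => f (x k)) atTop (𝓝 (f xs)) :=
    (Filter.tendsto_add_atTop_iff_nat 1).mp hfc
  have hfxs : f xs ≠ ⊤ := by
    have hle' : ∀ k, f (x k) ≤ ((aR 0 : ℝ) : EReal) := by
      intro k
      rw [← hfx 0]
      exact hmono' 0 k (Nat.zero_le k)
    have hlim := le_of_tendsto hftend (Filter.Eventually.of_forall hle')
    intro h
    rw [h] at hlim
    exact (EReal.coe_ne_top _) (top_le_iff.mp hlim)
  exact ⟨xs, hxs, hfxs, hftend, hslope0⟩
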